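/- Assume N_F > 1 and let Λ > 0, μ_S > 0, γ > 0, M_S* := Λ/μ_S. Call (M,F) with M > 0, F > 0 a positive equilibrium of the SIT model with constant releases if rρ·(F M/(M+γM_S*))·e^{−β(M+F)} = μ_M M and (1−r)ρ·(F M/(M+γM_S*))·e^{−β(M+F)} = μ_F F. Define Λ^crit := 2·(μ_S/(βγ))·φ^crit/(1 + N_F/N_M), where φ^crit is the unique positive solution of 1 + φ(1 + √(1 + 2/φ)) = N_F·exp(−2/(1 + √(1 + 2/φ))). Then there exist exactly two distinct positive equilibria if 0 < Λ < Λ^crit, exactly one positive equilibrium if Λ = Λ^crit, and no positive equilibrium if Λ > Λ^crit. -/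

import Mathlib

open Real Set

noncomputable def Gf (a b M : ℝ) : ℝ := a * M * Real.exp (-(b * M)) - M
noncomputable def gf (a b M : ℝ) : ℝ := a * (1 - b * M) * Real.exp (-(b * M)) - 1

lemma Gf_cont (a b : ℝ) : Continuous (Gf a b) := by unfold Gf; continuity
lemma gf_cont (a b : ℝ) : Continuous (gf a b) := by unfold gf; continuity

lemma exp_hasDeriv (b M : ℝ) :
    HasDerivAt (fun M : ℝ => Real.exp (-(b * M))) (Real.exp (-(b * M)) * (-b)) M := by
  have h : HasDerivAt (fun M : ℝ => -(b * M)) (-b) M := by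
    simpa using (hasDerivAt_id M).const_mul (-b)
  exact (Real.hasDerivAt_exp (-(b * M))).comp M h

lemma Gf_hasDeriv (a b M : ℝ) : HasDerivAt (Gf a b) (gf a b M) M := by
  have h1 : HasDerivAt (fun M : ℝ => a * M) a M := by
    simpa using (hasDerivAt_id M).const_mul a
  have h2 := (h1.mul (exp_hasDeriv b M)).sub (hasDerivAt_id M)
  refine h2.congr_deriv ?_
  unfold gf; ring

lemma gf_hasDeriv (a b M : ℝ) :
    HasDerivAt (gf a b) (a * b * Real.exp (-(b * M)) * (b * M - 2)) M := by
  have h1 : HasDerivAt (fun M : ℝ => a * (1 - b * M)) (a * (0 - b * 1)) M :=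
    ((hasDerivAt_const M (1:ℝ)).sub ((hasDerivAt_id M).const_mul b)).const_mul a
  have h2 := (h1.mul (exp_hasDeriv b M)).sub (hasDerivAt_const M (1:ℝ))
  refine h2.congr_deriv ?_
  ring

lemma key (a b : ℝ) (ha : 1 < a) (hb : 0 < b) :
    ∃ M₀ : ℝ, 0 < M₀ ∧ M₀ < 1 / b ∧
      a * (1 - b * M₀) * Real.exp (-(b * M₀)) = 1 ∧
      StrictMonoOn (Gf a b) (Set.Icc 0 M₀) ∧
      StrictAntiOn (Gf a b) (Set.Ici M₀) := by
  have ha0 : 0 < a := lt_trans one_pos ha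
  have hb' : 0 < 1 / b := by positivity
  have hganti : StrictAntiOn (gf a b) (Set.Icc 0 (1/b)) := by
    apply strictAntiOn_of_deriv_neg (convex_Icc _ _) (gf_cont a b).continuousOn
    intro x hx
    rw [interior_Icc] at hx
    rw [(gf_hasDeriv a b x).deriv]
    have h1 : b * x < 2 := by
      have h2 : x < 1 / b := hx.2
      rw [lt_div_iff₀ hb] at h2
      nlinarith
    have he := Real.exp_pos (-(b * x))
    nlinarith [mul_pos (mul_pos (mul_pos ha0 hb) he) (by linarith : (0:ℝ) < 2 - b * x)]
  have hg0 : gf a b 0 = a - 1 := by simp [gf]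
  have hg1b : gf a b (1 / b) = -1 := by
    unfold gf
    have : b * (1/b) = 1 := by field_simp
    rw [this]; norm_num
  have hmem : (0:ℝ) ∈ Set.Ioo (gf a b (1/b)) (gf a b 0) := by
    rw [hg0, hg1b]; constructor
    · norm_num
    · linarith
  obtain ⟨M₀, hM₀mem, hgM₀⟩ := intermediate_value_Ioo' (le_of_lt hb') (gf_cont a b).continuousOn hmem
  refine ⟨M₀, hM₀mem.1, hM₀mem.2, ?_, ?_, ?_⟩
  · unfold gf at hgM₀; linarith
  · apply strictMonoOn_of_deriv_pos (convex_Icc _ _) (Gf_cont a b).continuousOn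
    intro x hx; rw [interior_Icc] at hx
    rw [(Gf_hasDeriv a b x).deriv]
    have h := hganti ⟨hx.1.le, le_of_lt (lt_trans hx.2 hM₀mem.2)⟩
      ⟨hM₀mem.1.le, hM₀mem.2.le⟩ hx.2
    linarith [hgM₀ ▸ h]
  · apply strictAntiOn_of_deriv_neg (convex_Ici _) (Gf_cont a b).continuousOn
    intro x hx; rw [interior_Ici] at hx
    rw [(Gf_hasDeriv a b x).deriv]
    rcases le_or_gt x (1/b) with hle | hlt
    · have h := hganti ⟨hM₀mem.1.le, hM₀mem.2.le⟩
        ⟨le_trans hM₀mem.1.le (le_of_lt hx), hle⟩ hx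
      rw [hgM₀] at h
      linarith
    · unfold gf
      have h1 : 1 < b * x := by
        rw [div_lt_iff₀ hb] at hlt
        nlinarith
      have h2 := Real.exp_pos (-(b * x))
      nlinarith [mul_pos (mul_pos ha0 h2) (by linarith : (0:ℝ) < b * x - 1)]

/-- Equilibrium equations of the SIT model with constant releases
(sterile male population at its equilibrium value `MS* = Λ/μS`). -/
def isSITEquil (r ρ β μM μF γ MSstar M F : ℝ) : Prop :=
  r * ρ * (F * M / (M + γ * MSstar)) * Real.exp (-(β * (M + F))) = μM * M ∧
  (1 - r) * ρ * (F * M / (M + γ * MSstar)) * Real.exp (-(β * (M + F))) = μF * F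

set_option maxHeartbeats 1000000 in
theorem stmt_6 (r ρ β μM μF μS γ Λ φcrit : ℝ)
    (hr0 : 0 < r) (hr1 : r < 1) (hρ : 0 < ρ) (hβ : 0 < β)
    (hμM : 0 < μM) (hμF : 0 < μF) (hμS : 0 < μS) (hγ : 0 < γ)
    (hNF : 1 < (1 - r) * ρ / μF) (hΛ : 0 < Λ)
    (hφpos : 0 < φcrit)
    (hφroot : 1 + φcrit * (1 + Real.sqrt (1 + 2 / φcrit)) =
      ((1 - r) * ρ / μF) * Real.exp (-(2 / (1 + Real.sqrt (1 + 2 / φcrit)))))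
    (hφuniq : ∀ φ : ℝ, 0 < φ →
      1 + φ * (1 + Real.sqrt (1 + 2 / φ)) =
        ((1 - r) * ρ / μF) * Real.exp (-(2 / (1 + Real.sqrt (1 + 2 / φ)))) → φ = φcrit) :
    (Λ < 2 * (μS / (β * γ)) * φcrit / (1 + ((1 - r) * ρ / μF) / (r * ρ / μM)) →
      {p : ℝ × ℝ | 0 < p.1 ∧ 0 < p.2 ∧
        isSITEquil r ρ β μM μF γ (Λ / μS) p.1 p.2}.encard = 2) ∧
    (Λ = 2 * (μS / (β * γ)) * φcrit / (1 + ((1 - r) * ρ / μF) / (r * ρ / μM)) →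
      {p : ℝ × ℝ | 0 < p.1 ∧ 0 < p.2 ∧
        isSITEquil r ρ β μM μF γ (Λ / μS) p.1 p.2}.encard = 1) ∧
    (2 * (μS / (β * γ)) * φcrit / (1 + ((1 - r) * ρ / μF) / (r * ρ / μM)) < Λ →
      {p : ℝ × ℝ | 0 < p.1 ∧ 0 < p.2 ∧
        isSITEquil r ρ β μM μF γ (Λ / μS) p.1 p.2}.encard = 0) := by
  set NF := (1 - r) * ρ / μF with hNFdef
  set NM := r * ρ / μM with hNMdef
  have hNF0 : 0 < NF := lt_trans one_pos hNF
  have hNM0 : 0 < NM := by rw [hNMdef]; positivity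
  set k := NF / NM with hkdef
  have hk0 : 0 < k := div_pos hNF0 hNM0
  set b := β * (1 + k) with hbdef
  have hb0 : 0 < b := by rw [hbdef]; positivity
  set c := γ * (Λ / μS) with hcdef
  have hc0 : 0 < c := by rw [hcdef]; positivity
  have hr1' : (0:ℝ) < 1 - r := by linarith
  clear_value NF NM k b c
  -- key algebraic identities
  have hrρk : r * ρ * k = μM * NF := by
    rw [hkdef, hNMdef]; field_simp
  have hfρ : (1 - r) * ρ = μF * NF := by
    rw [hNFdef]; field_simp
  have hkval : k = (1 - r) * μM / (r * μF) := by
    rw [hkdef, hNFdef, hNMdef]; field_simp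
  -- the reduced root set
  set S := {M : ℝ | 0 < M ∧ Gf NF b M = c} with hSdef
  clear_value S
  -- equivalence of equilibrium set with root set
  have hSeq : ∀ M F : ℝ, (0 < M ∧ 0 < F ∧ isSITEquil r ρ β μM μF γ (Λ / μS) M F)
      ↔ (0 < M ∧ Gf NF b M = c ∧ F = k * M) := by
    intro M F
    constructor
    · rintro ⟨hM, hF, h1, h2⟩
      have hD0 : 0 < M + γ * (Λ / μS) := by positivity
      have hFk : F = k * M := by
        have hcross : ρ * ((1 - r) * (μM * M)) = ρ * (r * (μF * F)) := by
          linear_combination (r * ρ) * h2 - ((1 - r) * ρ) * h1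
        have hcross' : (1 - r) * (μM * M) = r * (μF * F) :=
          mul_left_cancel₀ hρ.ne' hcross
        rw [hkval]
        field_simp
        first
          | linear_combination hcross'
          | linear_combination (-1 : ℝ) * hcross'
          | linear_combination M * hcross'
          | nlinarith [hcross']
      have hbM : β * (M + F) = b * M := by rw [hFk, hbdef]; ring
      refine ⟨hM, ?_, hFk⟩
      show NF * M * Real.exp (-(b * M)) - M = c
      rw [← hbM]
      have h2'' : (1 - r) * ρ * (F * M) * Real.exp (-(β * (M + F))) / (M + γ * (Λ / μS))
          = μF * F := by
        rw [← h2]; ring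
      have h2' : (1 - r) * ρ * (F * M) * Real.exp (-(β * (M + F)))
          = μF * F * (M + γ * (Λ / μS)) := (div_eq_iff hD0.ne').mp h2''
      have hkey : NF * M * Real.exp (-(β * (M + F))) = M + γ * (Λ / μS) := by
        have hμFF : μF * F ≠ 0 := by positivity
        apply mul_left_cancel₀ hμFF
        linear_combination h2' - F * M * Real.exp (-(β * (M + F))) * hfρ
      rw [hcdef]; linarith [hkey]
    · rintro ⟨hM, hG, hFk⟩
      have hG' : NF * M * Real.exp (-(b * M)) - M = c := hG
      have hkey : NF * M * Real.exp (-(b * M)) = M + c := by linarith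
      have hbM : β * (M + F) = b * M := by rw [hFk, hbdef]; ring
      have hD0 : 0 < M + γ * (Λ / μS) := by positivity
      have hDc : M + γ * (Λ / μS) = M + c := by rw [hcdef]
      refine ⟨hM, by rw [hFk]; positivity, ?_, ?_⟩
      · show r * ρ * (F * M / (M + γ * (Λ / μS))) * Real.exp (-(β * (M + F))) = μM * M
        rw [hbM, hDc, hFk]
        have hMc0 : M + c ≠ 0 := by positivity
        field_simp
        linear_combination M * Real.exp (-(M * b)) * hrρk + μM * (by rw [mul_comm M b]; exact hkey : NF * M * Real.exp (-(M * b)) = M + c)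
      · show (1 - r) * ρ * (F * M / (M + γ * (Λ / μS))) * Real.exp (-(β * (M + F))) = μF * F
        rw [hbM, hDc, hFk]
        have hMc0 : M + c ≠ 0 := by positivity
        field_simp
        linear_combination M * Real.exp (-(M * b)) * hfρ + μF * (by rw [mul_comm M b]; exact hkey : NF * M * Real.exp (-(M * b)) = M + c)
  have setEq : {p : ℝ × ℝ | 0 < p.1 ∧ 0 < p.2 ∧
        isSITEquil r ρ β μM μF γ (Λ / μS) p.1 p.2}
      = (fun M : ℝ => (M, k * M)) '' S := by
    ext ⟨M, F⟩
    simp only [hSdef, Set.mem_setOf_eq, Set.mem_image, Prod.mk.injEq]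
    constructor
    · intro h
      obtain ⟨hM, hG, hFk⟩ := (hSeq M F).1 h
      exact ⟨M, ⟨hM, hG⟩, rfl, hFk.symm⟩
    · rintro ⟨x, ⟨hx, hG⟩, rfl, rfl⟩
      exact (hSeq x (k * x)).2 ⟨hx, hG, rfl⟩
  have hinj : Set.InjOn (fun M : ℝ => (M, k * M)) S := by
    clear hSdef
    intro x _ y _ h
    simpa using congrArg Prod.fst h
  -- unimodality
  obtain ⟨M₀, hM₀pos, hM₀lt, hgM₀, hmono, hanti⟩ := key NF b hNF hb0
  set cstar := Gf NF b M₀ with hcstardef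
  clear_value cstar
  have hG0 : Gf NF b 0 = 0 := by simp [Gf]
  have hGcont := Gf_cont NF b
  have hcstarpos : 0 < cstar := by
    have h := hmono ⟨le_refl 0, hM₀pos.le⟩ ⟨hM₀pos.le, le_refl M₀⟩ hM₀pos
    rw [hG0, ← hcstardef] at h
    exact h
  -- the φ computation
  set x := b * M₀ with hxdef
  clear_value x
  have hx0 : 0 < x := by rw [hxdef]; positivity
  have hx1 : x < 1 := by
    rw [hxdef]
    rw [lt_div_iff₀ hb0] at hM₀lt
    calc b * M₀ = M₀ * b := mul_comm b M₀
      _ < 1 := hM₀lt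
  have hu0 : 0 < 1 - x := by linarith
  have hgx : NF * (1 - x) * Real.exp (-x) = 1 := hgM₀
  have hae : NF * Real.exp (-x) = 1 / (1 - x) := by
    field_simp
    linear_combination hgx
  have hcstarval : cstar = M₀ * x / (1 - x) := by
    rw [hcstardef]
    show NF * M₀ * Real.exp (-(b * M₀)) - M₀ = M₀ * x / (1 - x)
    rw [← hxdef]
    field_simp
    linear_combination hgx
  set φ := b * cstar / 2 with hφdef
  clear_value φ
  have hφpos' : 0 < φ := by rw [hφdef]; positivity
  have hφval : φ = x ^ 2 / (2 * (1 - x)) := by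
    rw [hφdef, hcstarval]
    field_simp
    linear_combination hxdef.symm
  have hsqrt : Real.sqrt (1 + 2 / φ) = (2 - x) / x := by
    have h : 1 + 2 / φ = ((2 - x) / x) ^ 2 := by
      rw [hφval]; field_simp; ring
    rw [h, Real.sqrt_sq (div_nonneg (by linarith) hx0.le)]
  have hroot : 1 + φ * (1 + Real.sqrt (1 + 2 / φ)) =
      NF * Real.exp (-(2 / (1 + Real.sqrt (1 + 2 / φ)))) := by
    rw [hsqrt]
    have h1 : 1 + (2 - x) / x = 2 / x := by field_simp; ring
    rw [h1]
    have h2 : (2:ℝ) / (2 / x) = x := by field_simp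
    rw [h2, hae, hφval]
    field_simp
    ring
  have hφeq : φ = φcrit := hφuniq φ hφpos' hroot
  have hcstar_eq : cstar = 2 * φcrit / b := by
    rw [← hφeq, hφdef]
    field_simp
  have h1k : (0:ℝ) < 1 + k := by linarith
  have hcstarlin : cstar = (γ / μS) * (2 * (μS / (β * γ)) * φcrit / (1 + k)) := by
    rw [hcstar_eq, hbdef]
    field_simp
  have hclin : c = (γ / μS) * Λ := by rw [hcdef]; ring
  have hpos : (0:ℝ) < γ / μS := by positivity
  refine ⟨?_, ?_, ?_⟩
  · intro hΛ'
    have hclt : c < cstar := by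
      rw [hclin, hcstarlin]
      exact mul_lt_mul_of_pos_left hΛ' hpos
    rw [setEq, hinj.encard_image]
    -- two roots
    have hm1 : c ∈ Set.Ioo (Gf NF b 0) (Gf NF b M₀) := by
      rw [hG0, ← hcstardef]; exact ⟨hc0, hclt⟩
    obtain ⟨M₁, hM₁mem, hGM₁⟩ :=
      intermediate_value_Ioo (le_of_lt hM₀pos) hGcont.continuousOn hm1
    set T := max M₀ (Real.log NF / b) + 1 with hTdef
    clear_value T
    have hTM₀ : M₀ < T := by
      have := le_max_left M₀ (Real.log NF / b); rw [hTdef]; linarith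
    have hTpos : 0 < T := lt_trans hM₀pos hTM₀
    have hGT : Gf NF b T < 0 := by
      have hT2 : Real.log NF / b < T := by
        have := le_max_right M₀ (Real.log NF / b); rw [hTdef]; linarith
      have h3 : Real.log NF < b * T := by
        rw [div_lt_iff₀ hb0] at hT2
        calc Real.log NF < T * b := hT2
          _ = b * T := mul_comm T b
      have h5 : NF < Real.exp (b * T) := by
        rw [← Real.exp_log hNF0]; exact Real.exp_lt_exp.mpr h3
      have hmul : Real.exp (-(b * T)) * Real.exp (b * T) = 1 := by
        rw [← Real.exp_add]; simp
      have h4 : NF * Real.exp (-(b * T)) < 1 := by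
        have h6 := mul_lt_mul_of_pos_right h5 (Real.exp_pos (-(b * T)))
        rw [mul_comm (Real.exp (b * T)), hmul] at h6
        exact h6
      show NF * T * Real.exp (-(b * T)) - T < 0
      have h7 := mul_lt_mul_of_pos_left h4 hTpos
      rw [mul_one] at h7
      have h8 : NF * T * Real.exp (-(b * T)) = T * (NF * Real.exp (-(b * T))) := by ring
      linarith [h8.symm ▸ h7]
    have hm2 : c ∈ Set.Ioo (Gf NF b T) (Gf NF b M₀) := by
      rw [← hcstardef]; exact ⟨lt_trans hGT hc0, hclt⟩
    obtain ⟨M₂, hM₂mem, hGM₂⟩ :=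
      intermediate_value_Ioo' (le_of_lt hTM₀) hGcont.continuousOn hm2
    have hne : M₁ ≠ M₂ := ne_of_lt (lt_trans hM₁mem.2 hM₂mem.1)
    have hSpair : S = {M₁, M₂} := by
      ext M
      simp only [hSdef, Set.mem_setOf_eq, Set.mem_insert_iff, Set.mem_singleton_iff]
      constructor
      · rintro ⟨hMp, hGM⟩
        rcases lt_trichotomy M M₀ with h | h | h
        · left
          exact hmono.injOn ⟨hMp.le, h.le⟩ ⟨hM₁mem.1.le, hM₁mem.2.le⟩
            (hGM.trans hGM₁.symm)
        · exfalso
          rw [h] at hGM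
          rw [← hcstardef] at hGM
          linarith
        · right
          exact hanti.injOn (mem_Ici.2 h.le) (mem_Ici.2 hM₂mem.1.le)
            (hGM.trans hGM₂.symm)
      · rintro (rfl | rfl)
        · exact ⟨hM₁mem.1, hGM₁⟩
        · exact ⟨lt_trans hM₀pos hM₂mem.1, hGM₂⟩
    rw [hSpair]
    exact Set.encard_pair hne
  · intro hΛ'
    have hceq : c = cstar := by
      rw [hclin, hcstarlin, hΛ']
    rw [setEq, hinj.encard_image]
    have hSsing : S = {M₀} := by
      ext M
      simp only [hSdef, Set.mem_setOf_eq, Set.mem_singleton_iff]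
      constructor
      · rintro ⟨hMp, hGM⟩
        rcases lt_trichotomy M M₀ with h | h | h
        · exfalso
          have := hmono ⟨hMp.le, h.le⟩ ⟨hM₀pos.le, le_refl M₀⟩ h
          rw [← hcstardef, hGM] at this
          linarith
        · exact h
        · exfalso
          have := hanti (mem_Ici.2 (le_refl M₀)) (mem_Ici.2 h.le) h
          rw [← hcstardef, hGM] at this
          linarith
      · rintro rfl
        exact ⟨hM₀pos, by rw [← hcstardef, hceq]⟩
    rw [hSsing]
    exact Set.encard_singleton M₀
  · intro hΛ'
    have hcgt : cstar < c := by
      rw [hclin, hcstarlin]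
      exact mul_lt_mul_of_pos_left hΛ' hpos
    rw [setEq, hinj.encard_image]
    have hSempty : S = ∅ := by
      ext M
      simp only [hSdef, Set.mem_setOf_eq, Set.mem_empty_iff_false, iff_false, not_and]
      intro hMp hGM
      rcases le_or_gt M M₀ with h | h
      · have := hmono.monotoneOn ⟨hMp.le, h⟩ ⟨hM₀pos.le, le_refl M₀⟩ h
        rw [← hcstardef, hGM] at this
        linarith
      · have := hanti (mem_Ici.2 (le_refl M₀)) (mem_Ici.2 h.le) h
        rw [← hcstardef, hGM] at this
        linarith
    rw [hSempty]
    exact Set.encard_empty
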